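/- arXiv:2507.01602 — 4 statements merged into one kernel-verified Lean document; each statement's English description precedes it below -/
import Mathlib

section
/- If a real random variable Δ on a finite probability space satisfies E[e^{-Δ}] = 1 and |Δ(x)| ≤ ε for all x, then the second moment satisfies |E[Δ²] − 2E[Δ]| ≤ e^{ε} ε³ / 3 (i.e., E[Δ²] = 2E[Δ] + O(Δ³)). -/
open scoped Nat

lemma exp_hasSum (t : ℝ) : HasSum (fun n => t ^ n / n !) (Real.exp t) := by
  rw [Real.exp_eq_exp_ℝ]
  exact NormedSpace.expSeries_div_hasSum_exp t

lemma taylor3 (t : ℝ) : |Real.exp t - (1 + t + t ^ 2 / 2)| ≤ Real.exp |t| * |t| ^ 3 / 6 := by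
  have h := exp_hasSum t
  have habs := exp_hasSum |t|
  have hsum := h.summable
  have key := (Summable.sum_add_tsum_nat_add (f := fun n => t ^ n / n !) 3 hsum)
  rw [h.tsum_eq] at key
  have hpart : ∑ i ∈ Finset.range 3, t ^ i / i ! = 1 + t + t ^ 2 / 2 := by
    simp [Finset.sum_range_succ, Nat.factorial]
  have hrem : Real.exp t - (1 + t + t ^ 2 / 2) = ∑' n : ℕ, t ^ (n + 3) / (n + 3)! := by
    rw [← hpart]; linarith [key]
  rw [hrem]
  have hsummable_shift : Summable (fun n : ℕ => |t| ^ (n + 3) / ((n + 3)! : ℝ)) :=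
    habs.summable.comp_injective (add_left_injective 3)
  have hbig : Summable (fun n : ℕ => |t| ^ 3 / 6 * (|t| ^ n / n !)) :=
    habs.summable.mul_left _
  have habseq : ∀ n : ℕ, |t ^ (n + 3) / ((n + 3)! : ℝ)| = |t| ^ (n + 3) / ((n + 3)! : ℝ) := by
    intro n; rw [abs_div, abs_pow, abs_of_nonneg (by positivity : (0:ℝ) ≤ ((n+3)! : ℝ))]
  calc |∑' n : ℕ, t ^ (n + 3) / ((n + 3)! : ℝ)|
      ≤ ∑' n : ℕ, |t| ^ (n + 3) / ((n + 3)! : ℝ) := by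
        rw [← Real.norm_eq_abs]
        refine (norm_tsum_le_tsum_norm ?_).trans_eq ?_
        · exact hsummable_shift.congr fun n => ((Real.norm_eq_abs _).trans (habseq n)).symm
        · exact tsum_congr fun n => by rw [Real.norm_eq_abs, habseq n]
    _ ≤ ∑' n : ℕ, |t| ^ 3 / 6 * (|t| ^ n / n !) := by
        refine Summable.tsum_le_tsum (fun n => ?_) hsummable_shift hbig
        rw [pow_add, div_mul_div_comm, mul_comm (|t|^n) (|t|^3)]
        have hfac : (6 : ℝ) * n ! ≤ ((n + 3)! : ℝ) := by
          have hn : 6 * n ! ≤ (n + 3)! := by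
            have he : (n+3)! = (n+3) * ((n+2) * ((n+1) * n !)) := by
              simp [Nat.factorial_succ]
            rw [he]
            calc 6 * n ! = 6 * n ! := rfl
              _ ≤ ((n+3) * ((n+2) * (n+1))) * n ! := by
                  apply Nat.mul_le_mul_right
                  have h6 : 3*(2*1) ≤ (n+3) * ((n+2) * (n+1)) :=
                    Nat.mul_le_mul (by omega) (Nat.mul_le_mul (by omega) (by omega))
                  omega
              _ = (n+3) * ((n+2) * ((n+1) * n !)) := by ring
          exact_mod_cast hn
        apply div_le_div_of_nonneg_left (by positivity) (by positivity) hfac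
    _ = Real.exp |t| * |t| ^ 3 / 6 := by
        rw [tsum_mul_left, habs.tsum_eq]; ring

/-- Second-moment relation from an integral fluctuation theorem: if E[e^{-Δ}] = 1 and
|Δ| ≤ ε pointwise, then |E[Δ²] − 2E[Δ]| ≤ e^ε ε³ / 3. -/
theorem stmt2 {X : Type*} [Fintype X]
    (P : X → ℝ) (hnn : ∀ x, 0 ≤ P x) (hsum : ∑ x, P x = 1)
    (Δ : X → ℝ) (ε : ℝ) (hε : 0 < ε) (hbd : ∀ x, |Δ x| ≤ ε)
    (hFT : ∑ x, P x * Real.exp (-Δ x) = 1) :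
    |(∑ x, P x * (Δ x) ^ 2) - 2 * ∑ x, P x * Δ x| ≤ Real.exp ε * ε ^ 3 / 3 := by
  set B : ℝ := Real.exp ε * ε ^ 3 / 6 with hB
  have key : ∀ x, |Real.exp (-Δ x) - (1 - Δ x + (Δ x) ^ 2 / 2)| ≤ B := by
    intro x
    have h := taylor3 (-Δ x)
    have he : Real.exp (-Δ x) - (1 - Δ x + (Δ x) ^ 2 / 2)
        = Real.exp (-Δ x) - (1 + (-Δ x) + (-Δ x) ^ 2 / 2) := by ring
    rw [he]
    refine h.trans ?_
    rw [abs_neg]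
    have h0 : (0:ℝ) ≤ |Δ x| := abs_nonneg _
    have hmul : Real.exp |Δ x| * |Δ x| ^ 3 ≤ Real.exp ε * ε ^ 3 :=
      mul_le_mul (Real.exp_le_exp.2 (hbd x)) (pow_le_pow_left₀ h0 (hbd x) 3)
        (by positivity) (by positivity)
    rw [hB]; linarith
  set S : ℝ := ∑ x, P x * (Real.exp (-Δ x) - (1 - Δ x + (Δ x) ^ 2 / 2)) with hS
  have hSval : S = (∑ x, P x * Δ x) - (∑ x, P x * (Δ x) ^ 2) / 2 := by
    have e1 : S = (∑ x, P x * Real.exp (-Δ x)) - ((∑ x, P x)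
        - (∑ x, P x * Δ x) + (∑ x, P x * (Δ x) ^ 2) / 2) := by
      have e0 : ∀ x, P x * (Real.exp (-Δ x) - (1 - Δ x + (Δ x) ^ 2 / 2))
          = P x * Real.exp (-Δ x) - (P x - P x * Δ x + (P x * (Δ x) ^ 2) / 2) :=
        fun x => by ring
      rw [hS, Finset.sum_congr rfl (fun x _ => e0 x), Finset.sum_sub_distrib,
        Finset.sum_add_distrib, Finset.sum_sub_distrib, Finset.sum_div]
    rw [e1, hFT, hsum]; ring
  have hSbd : |S| ≤ B := by
    calc |S| ≤ ∑ x, |P x * (Real.exp (-Δ x) - (1 - Δ x + (Δ x) ^ 2 / 2))| :=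
          Finset.abs_sum_le_sum_abs _ _
      _ ≤ ∑ x, P x * B := by
          refine Finset.sum_le_sum fun x _ => ?_
          rw [abs_mul, abs_of_nonneg (hnn x)]
          exact mul_le_mul_of_nonneg_left (key x) (hnn x)
      _ = B := by rw [← Finset.sum_mul, hsum, one_mul]
  have hfinal : (∑ x, P x * (Δ x) ^ 2) - 2 * ∑ x, P x * Δ x = -2 * S := by
    rw [hSval]; ring
  rw [hfinal, abs_mul]
  have : |(-2 : ℝ)| = 2 := by norm_num
  rw [this]
  have : Real.exp ε * ε ^ 3 / 3 = 2 * B := by rw [hB]; ring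
  rw [this]
  exact mul_le_mul_of_nonneg_left hSbd (by norm_num)
end

section
/- Integral fluctuation theorem for total classical correlation: with notation as in the setup, define the forward path probability P^F[s,n,s',n'] = ∑ over trajectories of ∏_j K_j((s'_j,n'_j)|(s_j,n_j)) p(s) r(n), where the system starts in joint pmf p with marginals p_j, the environment starts in product pmf r(n) = ∏_j r_j(n_j), and each pair (site j of system, site j of environment) evolves jointly by a doubly-indexed stochastic (deterministic-reversible, i.e., permutation) kernel. Define Δι_cl = ln p(s) − ∑_j ln p_j(s_j) − (ln p'(s') − ∑_j ln p'_j(s'_j)), where p' is the final system pmf and p'_j its marginals, assuming all relevant probabilities are positive. Then the expectation E_{P^F}[e^{-Δι_cl}] = 1. -/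
/-- Marginal of a joint pmf on a finite product space at site `j`. -/
noncomputable def marg {N : ℕ} {X : Fin N → Type*}
    [∀ j, Fintype (X j)] [∀ j, DecidableEq (X j)]
    (p : (∀ j, X j) → ℝ) (j : Fin N) (a : X j) : ℝ :=
  ∑ x : ∀ i, X i, if x j = a then p x else 0

/-- Final system pmf after each system site `j` evolves jointly with its own environment
site by the permutation (deterministic reversible kernel) `π j`. -/
noncomputable def finalSys {N : ℕ} {S E : Fin N → Type*}
    [∀ j, Fintype (S j)] [∀ j, DecidableEq (S j)] [∀ j, Fintype (E j)]
    (p : (∀ j, S j) → ℝ) (r : ∀ j, E j → ℝ)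
    (π : ∀ j, (S j × E j) ≃ (S j × E j)) (s' : ∀ j, S j) : ℝ :=
  ∑ s : ∀ j, S j, ∑ n : ∀ j, E j,
    if ∀ j, (π j (s j, n j)).1 = s' j then p s * ∏ j, r j (n j) else 0

open Finset

section aux
variable {N : ℕ} {S E : Fin N → Type*}
    [∀ j, Fintype (S j)] [∀ j, DecidableEq (S j)]
    [∀ j, Fintype (E j)] [∀ j, DecidableEq (E j)]

lemma sum_pi_prod {X : Fin N → Type*}
    [∀ j, Fintype (X j)] [∀ j, DecidableEq (X j)]
    (f : ∀ j, X j → ℝ) :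
    ∑ x : ∀ i, X i, ∏ i, f i (x i) = ∏ i, ∑ a, f i a := by
  rw [Finset.prod_univ_sum]; simp [Fintype.piFinset_univ]

lemma sum_marg_mul {X : Fin N → Type*}
    [∀ j, Fintype (X j)] [∀ j, DecidableEq (X j)]
    (p : (∀ j, X j) → ℝ) (j : Fin N) (g : X j → ℝ) :
    ∑ a : X j, marg p j a * g a = ∑ x : ∀ i, X i, p x * g (x j) := by
  unfold marg
  simp only [Finset.sum_mul, ite_mul, zero_mul]
  rw [Finset.sum_comm]
  refine Finset.sum_congr rfl fun x _ => ?_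
  rw [Finset.sum_ite_eq univ (x j) (fun a => p x * g a)]
  simp

lemma sum_pi_prod_mul {X : Fin N → Type*}
    [∀ j, Fintype (X j)] [∀ j, DecidableEq (X j)]
    (f : ∀ j, X j → ℝ) (hf : ∀ i, ∑ a, f i a = 1) (j : Fin N) (g : X j → ℝ) :
    ∑ x : ∀ i, X i, (∏ i, f i (x i)) * g (x j) = ∑ a, f j a * g a := by
  set F : ∀ i, X i → ℝ := Function.update f j (fun a => f j a * g a) with hF
  have h1 : ∀ x : ∀ i, X i, (∏ i, F i (x i)) = (∏ i, f i (x i)) * g (x j) := by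
    intro x
    rw [← Finset.mul_prod_erase univ (fun i => F i (x i)) (mem_univ j),
        ← Finset.mul_prod_erase univ (fun i => f i (x i)) (mem_univ j)]
    have h2 : ∀ i ∈ univ.erase j, F i (x i) = f i (x i) := by
      intro i hi
      rw [hF, Function.update_of_ne (Finset.ne_of_mem_erase hi)]
    rw [Finset.prod_congr rfl h2]
    simp [hF]; ring
  calc ∑ x : ∀ i, X i, (∏ i, f i (x i)) * g (x j)
      = ∑ x : ∀ i, X i, ∏ i, F i (x i) := by simp only [h1]
    _ = ∏ i, ∑ a, F i a := sum_pi_prod F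
    _ = (∑ a, F j a) * ∏ i ∈ univ.erase j, ∑ a, F i a :=
        (Finset.mul_prod_erase univ _ (mem_univ j)).symm
    _ = ∑ a, f j a * g a := by
        rw [Finset.prod_eq_one, mul_one]
        · simp [hF]
        · intro i hi
          rw [hF]
          simp [Function.update_of_ne (Finset.ne_of_mem_erase hi), hf i]

lemma marg_finalSys (p : (∀ j, S j) → ℝ) (r : ∀ j, E j → ℝ)
    (hrsum : ∀ j, ∑ n, r j n = 1)
    (π : ∀ j, (S j × E j) ≃ (S j × E j)) (j : Fin N) (a : S j) :
    marg (finalSys p r π) j a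
      = ∑ y : S j × E j, if (π j y).1 = a then marg p j y.1 * r j y.2 else 0 := by
  have key : marg (finalSys p r π) j a
      = ∑ s : ∀ i, S i, ∑ n : ∀ i, E i,
          if (π j (s j, n j)).1 = a then p s * ∏ i, r i (n i) else 0 := by
    unfold marg finalSys
    have hpush : ∀ x : ∀ i, S i,
        (if x j = a then (∑ s : ∀ i, S i, ∑ n : ∀ i, E i,
            if ∀ i, (π i (s i, n i)).1 = x i then p s * ∏ i, r i (n i) else 0) else 0)
        = ∑ s : ∀ i, S i, ∑ n : ∀ i, E i,
            (if x j = a then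
              (if ∀ i, (π i (s i, n i)).1 = x i then p s * ∏ i, r i (n i) else 0) else 0) := by
      intro x; split <;> simp
    simp only [hpush]
    rw [Finset.sum_comm]
    refine Finset.sum_congr rfl fun s _ => ?_
    rw [Finset.sum_comm]
    refine Finset.sum_congr rfl fun n _ => ?_
    have hite : ∀ x : ∀ i, S i,
        (if x j = a then
          (if ∀ i, (π i (s i, n i)).1 = x i then p s * ∏ i, r i (n i) else 0) else 0)
        = if (fun i => (π i (s i, n i)).1) = x then
            (if x j = a then p s * ∏ i, r i (n i) else 0) else 0 := by
      intro x
      by_cases h : (fun i => (π i (s i, n i)).1) = x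
      · subst h; simp
      · rw [if_neg h]
        rcases Classical.em (x j = a) with h1 | h1
        · rw [if_pos h1, if_neg (fun hc => h (funext hc))]
        · simp [h1]
    simp only [hite]
    rw [Finset.sum_ite_eq univ (fun i => (π i (s i, n i)).1)
        (fun x => if x j = a then p s * ∏ i, r i (n i) else 0)]
    simp
  rw [key]
  have step1 : ∀ s : ∀ i, S i,
      (∑ n : ∀ i, E i, if (π j (s j, n j)).1 = a then p s * ∏ i, r i (n i) else 0)
      = p s * ∑ b : E j, r j b * (if (π j (s j, b)).1 = a then 1 else 0) := by
    intro s
    have : ∀ n : ∀ i, E i,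
        (if (π j (s j, n j)).1 = a then p s * ∏ i, r i (n i) else 0)
        = (∏ i, r i (n i)) * (p s * (if (π j (s j, n j)).1 = a then 1 else 0)) := by
      intro n; split <;> ring
    simp only [this]
    rw [sum_pi_prod_mul r hrsum j
        (fun b => p s * (if (π j (s j, b)).1 = a then 1 else 0)), Finset.mul_sum]
    refine Finset.sum_congr rfl fun b _ => ?_
    ring
  simp only [step1]
  rw [← sum_marg_mul p j
      (fun c => ∑ b : E j, r j b * (if (π j (c, b)).1 = a then 1 else 0))]
  rw [Fintype.sum_prod_type]
  refine Finset.sum_congr rfl fun c _ => ?_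
  rw [Finset.mul_sum]
  refine Finset.sum_congr rfl fun b _ => ?_
  split <;> ring


lemma marg_finalSys' (p : (∀ j, S j) → ℝ) (r : ∀ j, E j → ℝ)
    (hrsum : ∀ j, ∑ n, r j n = 1)
    (π : ∀ j, (S j × E j) ≃ (S j × E j)) (j : Fin N) (a : S j) :
    marg (finalSys p r π) j a
      = ∑ b : E j, marg p j ((π j).symm (a, b)).1 * r j ((π j).symm (a, b)).2 := by
  rw [marg_finalSys p r hrsum π j a]
  rw [← Equiv.sum_comp (π j).symm
      (fun y => if (π j y).1 = a then marg p j y.1 * r j y.2 else 0)]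
  simp only [Equiv.apply_symm_apply]
  rw [Fintype.sum_prod_type]
  have hpush : ∀ x : S j,
      (∑ b : E j, if (x, b).1 = a
          then marg p j ((π j).symm (x, b)).1 * r j ((π j).symm (x, b)).2 else 0)
      = if x = a then
          ∑ b : E j, marg p j ((π j).symm (x, b)).1 * r j ((π j).symm (x, b)).2 else 0 := by
    intro x; by_cases h : x = a <;> simp [h]
  simp only [hpush]
  rw [Finset.sum_ite_eq' univ a
      (fun c => ∑ b : E j, marg p j ((π j).symm (c, b)).1 * r j ((π j).symm (c, b)).2)]
  simp

lemma finalSys_sum_one (p : (∀ j, S j) → ℝ) (r : ∀ j, E j → ℝ)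
    (hpsum : ∑ s, p s = 1) (hrsum : ∀ j, ∑ n, r j n = 1)
    (π : ∀ j, (S j × E j) ≃ (S j × E j)) :
    ∑ s' : ∀ j, S j, finalSys p r π s' = 1 := by
  unfold finalSys
  rw [Finset.sum_comm]
  have : ∀ s : ∀ j, S j,
      (∑ s' : ∀ j, S j, ∑ n : ∀ j, E j,
        if ∀ j, (π j (s j, n j)).1 = s' j then p s * ∏ j, r j (n j) else 0)
      = p s := by
    intro s
    rw [Finset.sum_comm]
    have h1 : ∀ n : ∀ j, E j,
        (∑ s' : ∀ j, S j,
          if ∀ j, (π j (s j, n j)).1 = s' j then p s * ∏ j, r j (n j) else 0)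
        = p s * ∏ j, r j (n j) := by
      intro n
      have h2 : ∀ s' : ∀ j, S j,
          (if ∀ j, (π j (s j, n j)).1 = s' j then p s * ∏ j, r j (n j) else 0)
          = (if (fun j => (π j (s j, n j)).1) = s' then p s * ∏ j, r j (n j) else 0) :=
        fun s' => if_congr funext_iff.symm rfl rfl
      simp only [h2]
      rw [Finset.sum_ite_eq univ (fun j => (π j (s j, n j)).1)
          (fun _ => p s * ∏ j, r j (n j))]
      simp
    simp only [h1]
    rw [← Finset.mul_sum, sum_pi_prod r]
    simp [hrsum]
  simp only [this, hpsum]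

end aux

private def pairPi {N : ℕ} {S E : Fin N → Type*} :
    ((∀ j, S j) × (∀ j, E j)) ≃ (∀ j, S j × E j) where
  toFun x j := (x.1 j, x.2 j)
  invFun y := (fun j => (y j).1, fun j => (y j).2)
  left_inv x := rfl
  right_inv y := rfl

/-- Integral fluctuation theorem for the total classical correlation:
E_{P^F}[e^{-Δι_cl}] = 1. -/
theorem stmt7 {N : ℕ} {S E : Fin N → Type*}
    [∀ j, Fintype (S j)] [∀ j, DecidableEq (S j)]
    [∀ j, Fintype (E j)] [∀ j, DecidableEq (E j)]
    (p : (∀ j, S j) → ℝ) (r : ∀ j, E j → ℝ)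
    (hp : ∀ s, 0 < p s) (hpsum : ∑ s, p s = 1)
    (hr : ∀ j n, 0 ≤ r j n) (hrsum : ∀ j, ∑ n, r j n = 1)
    (π : ∀ j, (S j × E j) ≃ (S j × E j))
    (hp' : ∀ s', 0 < finalSys p r π s')
    (hpj : ∀ j a, 0 < marg p j a) (hpj' : ∀ j a, 0 < marg (finalSys p r π) j a) :
    ∑ s : ∀ j, S j, ∑ n : ∀ j, E j,
      (p s * ∏ j, r j (n j)) *
        Real.exp (-(Real.log (p s) - (∑ j, Real.log (marg p j (s j)))
          - (Real.log (finalSys p r π (fun j => (π j (s j, n j)).1))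
            - ∑ j, Real.log (marg (finalSys p r π) j (π j (s j, n j)).1)))) = 1 := by
  set q : ∀ j, S j × E j → ℝ := fun j y => marg p j y.1 * r j y.2 with hq
  set F : (∀ j, S j) → ℝ :=
    fun t => finalSys p r π t / ∏ j, marg (finalSys p r π) j (t j) with hF
  have hterm : ∀ (s : ∀ j, S j) (n : ∀ j, E j),
      (p s * ∏ j, r j (n j)) *
        Real.exp (-(Real.log (p s) - (∑ j, Real.log (marg p j (s j)))
          - (Real.log (finalSys p r π (fun j => (π j (s j, n j)).1))
            - ∑ j, Real.log (marg (finalSys p r π) j (π j (s j, n j)).1))))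
      = (∏ j, q j (s j, n j)) * F (fun j => (π j (s j, n j)).1) := by
    intro s n
    have e1 : -(Real.log (p s) - (∑ j, Real.log (marg p j (s j)))
          - (Real.log (finalSys p r π (fun j => (π j (s j, n j)).1))
            - ∑ j, Real.log (marg (finalSys p r π) j (π j (s j, n j)).1)))
        = ((∑ j, Real.log (marg p j (s j)))
            + Real.log (finalSys p r π (fun j => (π j (s j, n j)).1)))
          - (Real.log (p s)
            + ∑ j, Real.log (marg (finalSys p r π) j (π j (s j, n j)).1)) := by ring
    rw [e1, Real.exp_sub, Real.exp_add, Real.exp_add, Real.exp_sum, Real.exp_sum,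
        Real.exp_log (hp s), Real.exp_log (hp' _)]
    simp only [Real.exp_log (hpj _ _), Real.exp_log (hpj' _ _)]
    rw [hq, hF]
    simp only []
    rw [Finset.prod_mul_distrib]
    have h0 : p s ≠ 0 := (hp s).ne'
    have hMne : (∏ j, marg (finalSys p r π) j ((π j) (s j, n j)).1) ≠ 0 :=
      (Finset.prod_pos fun j _ => hpj' _ _).ne'
    field_simp
  simp only [hterm]
  have step1 : ∑ s : ∀ j, S j, ∑ n : ∀ j, E j,
        (∏ j, q j (s j, n j)) * F (fun j => (π j (s j, n j)).1)
      = ∑ y : ∀ j, S j × E j, (∏ j, q j (y j)) * F (fun j => (π j (y j)).1) := by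
    have h1 : (∑ x : (∀ j, S j) × (∀ j, E j),
          (∏ j, q j (x.1 j, x.2 j)) * F (fun j => (π j (x.1 j, x.2 j)).1))
        = ∑ y : ∀ j, S j × E j, (∏ j, q j (y j)) * F (fun j => (π j (y j)).1) :=
      Fintype.sum_equiv pairPi _ _ (fun x => rfl)
    rw [← h1]
    exact (Fintype.sum_prod_type (fun x : (∀ j, S j) × (∀ j, E j) =>
      (∏ j, q j (x.1 j, x.2 j)) * F (fun j => (π j (x.1 j, x.2 j)).1))).symm
  rw [step1]
  have step2 : ∑ y : ∀ j, S j × E j, (∏ j, q j (y j)) * F (fun j => (π j (y j)).1)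
      = ∑ z : ∀ j, S j × E j, (∏ j, q j ((π j).symm (z j))) * F (fun j => (z j).1) := by
    refine Fintype.sum_equiv (Equiv.piCongrRight fun j => π j) _ _ fun y => ?_
    simp [Equiv.piCongrRight]
  rw [step2]
  have step3 : ∑ z : ∀ j, S j × E j, (∏ j, q j ((π j).symm (z j))) * F (fun j => (z j).1)
      = ∑ s' : ∀ j, S j, ∑ n' : ∀ j, E j,
          (∏ j, q j ((π j).symm (s' j, n' j))) * F s' := by
    have h1 : (∑ x : (∀ j, S j) × (∀ j, E j),
          (∏ j, q j ((π j).symm (x.1 j, x.2 j))) * F (fun j => ((x.1 j, x.2 j) : S j × E j).1))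
        = ∑ z : ∀ j, S j × E j, (∏ j, q j ((π j).symm (z j))) * F (fun j => (z j).1) :=
      Fintype.sum_equiv pairPi _ _ (fun x => rfl)
    rw [← h1]
    exact Fintype.sum_prod_type (fun x : (∀ j, S j) × (∀ j, E j) =>
      (∏ j, q j ((π j).symm (x.1 j, x.2 j))) * F (fun j => ((x.1 j, x.2 j) : S j × E j).1))
  rw [step3]
  have step4 : ∀ s' : ∀ j, S j,
      (∑ n' : ∀ j, E j, (∏ j, q j ((π j).symm (s' j, n' j))) * F s')
      = finalSys p r π s' := by
    intro s'
    rw [← Finset.sum_mul, sum_pi_prod (fun j b => q j ((π j).symm (s' j, b)))]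
    have h1 : ∀ j, (∑ b : E j, q j ((π j).symm (s' j, b)))
        = marg (finalSys p r π) j (s' j) := by
      intro j
      rw [marg_finalSys' p r hrsum π j (s' j)]
    rw [Finset.prod_congr rfl fun j _ => h1 j]
    rw [hF]
    have hne : (∏ j, marg (finalSys p r π) j (s' j)) ≠ 0 :=
      (Finset.prod_pos fun j _ => hpj' j (s' j)).ne'
    field_simp
  simp only [step4]
  exact finalSys_sum_one p r hpsum hrsum π
end

section
/- Reduction of quasiprobability to classical probability: if in addition the projectors Π_k commute with Π_s ⊗ 1 for all k, s (in particular if ρ_S is diagonal in the product basis defining Π_s and Π_k are its eigenprojectors built from the same basis), and similarly Π_{k'} commute with Π_{s'} ⊗ 1, then every value of the quasiprobability Q[k,s,n,k',s',n'] = Tr(U† Π_{k'}(Π_{s'}⊗Π_{n'}) U (Π_s⊗Π_n) Π_k ρ_S⊗ρ_E) is a nonnegative real number. -/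
open Matrix Kronecker ComplexOrder

/-- A resolution of the identity: a finite family of mutually orthogonal Hermitian
projectors summing to the identity. -/
def IsResolution {n ι : Type*} [Fintype n] [DecidableEq n] [Fintype ι] [DecidableEq ι]
    (P : ι → Matrix n n ℂ) : Prop :=
  (∀ a, (P a).IsHermitian) ∧ (∀ a b, P a * P b = if a = b then P a else 0) ∧
    (∑ a, P a = 1)

section Aux

variable {m n : Type*} [Fintype m] [Fintype n] [DecidableEq m] [DecidableEq n]

lemma aux_trace_nonneg {A : Matrix n n ℂ} (hA : A.PosSemidef) : 0 ≤ A.trace := by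
  rw [Matrix.trace]
  apply Finset.sum_nonneg
  intro i _
  have := hA.dotProduct_mulVec_nonneg (Pi.single i 1)
  simpa [dotProduct, Matrix.mulVec, Pi.single_apply, Finset.mul_sum] using this

open scoped MatrixOrder in
lemma aux_psd_eq_conjTranspose_mul_self {A : Matrix n n ℂ} (hA : A.PosSemidef) :
    ∃ X : Matrix n n ℂ, A = Xᴴ * X :=
  ⟨CFC.sqrt A, by
    rw [(CFC.sqrt_nonneg A).posSemidef.isHermitian.eq, CFC.sqrt_mul_sqrt_self A hA.nonneg]⟩

lemma aux_kron_conjTranspose (A : Matrix m m ℂ) (B : Matrix n n ℂ) :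
    (A ⊗ₖ B)ᴴ = Aᴴ ⊗ₖ Bᴴ := by
  ext ⟨i, j⟩ ⟨k, l⟩
  simp [Matrix.conjTranspose_apply, Matrix.kroneckerMap_apply]

lemma aux_kron_psd {A : Matrix m m ℂ} {B : Matrix n n ℂ}
    (hA : A.PosSemidef) (hB : B.PosSemidef) : (A ⊗ₖ B).PosSemidef := by
  obtain ⟨X, hX⟩ := aux_psd_eq_conjTranspose_mul_self hA
  obtain ⟨Y, hY⟩ := aux_psd_eq_conjTranspose_mul_self hB
  have : A ⊗ₖ B = (X ⊗ₖ Y)ᴴ * (X ⊗ₖ Y) := by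
    rw [aux_kron_conjTranspose, ← Matrix.mul_kronecker_mul, ← hX, ← hY]
  rw [this]
  exact Matrix.posSemidef_conjTranspose_mul_self _

lemma aux_trace_mul_nonneg {A B : Matrix n n ℂ}
    (hA : A.PosSemidef) (hB : B.PosSemidef) : 0 ≤ (A * B).trace := by
  obtain ⟨C, hC⟩ := aux_psd_eq_conjTranspose_mul_self hB
  have h1 : (A * B).trace = (C * A * Cᴴ).trace := by
    rw [hC, ← Matrix.mul_assoc, Matrix.trace_mul_comm, Matrix.mul_assoc]
  rw [h1]
  exact aux_trace_nonneg (hA.mul_mul_conjTranspose_same C)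

lemma aux_sandwich {R : Type*} [Ring R] (p q r : R) (hp : p * p = p) (hq : q * q = q)
    (hpq : p * q = q * p) (hpr : p * r = r * p) (hqr : q * r = r * q) :
    (q * p) * r * (p * q) = q * p * r := by
  calc (q * p) * r * (p * q) = q * ((p * r) * (p * q)) := by noncomm_ring
    _ = q * ((r * p) * (p * q)) := by rw [hpr]
    _ = q * r * (p * p) * q := by noncomm_ring
    _ = q * r * p * q := by rw [hp]
    _ = q * (r * p) * q := by noncomm_ring
    _ = q * (p * r) * q := by rw [← hpr]
    _ = q * p * (r * q) := by noncomm_ring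
    _ = q * p * (q * r) := by rw [← hqr]
    _ = q * (p * q) * r := by noncomm_ring
    _ = q * (q * p) * r := by rw [hpq]
    _ = (q * q) * (p * r) := by noncomm_ring
    _ = q * (p * r) := by rw [hq]
    _ = q * p * r := by noncomm_ring

lemma aux_sandwich1 {R : Type*} [Ring R] (p r : R) (hp : p * p = p)
    (hpr : p * r = r * p) : p * r * p = p * r := by
  rw [hpr, mul_assoc, hp, ← hpr]

/-- A product of two commuting Hermitian idempotents is PSD. -/
lemma aux_proj_psd {A B : Matrix n n ℂ} (hA : A.IsHermitian) (hB : B.IsHermitian)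
    (hAA : A * A = A) (hBB : B * B = B) (hAB : A * B = B * A) :
    (A * B).PosSemidef := by
  have herm : (A * B)ᴴ = A * B := by
    rw [Matrix.conjTranspose_mul, hA.eq, hB.eq, ← hAB]
  have idem : (A * B) * (A * B) = A * B := by
    calc (A * B) * (A * B) = A * (B * A) * B := by noncomm_ring
      _ = A * (A * B) * B := by rw [← hAB]
      _ = (A * A) * (B * B) := by noncomm_ring
      _ = A * B := by rw [hAA, hBB]
  have : A * B = (A * B)ᴴ * (A * B) := by rw [herm, idem]
  rw [this]
  exact Matrix.posSemidef_conjTranspose_mul_self _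

end Aux

/-- Reduction of the quasiprobability to a classical (two-point-measurement)
probability: if the projectors Π_k commute with Π_s ⊗ 1 (and the primed ones likewise),
then every value of Q is a nonnegative real number. -/
theorem stmt11 {dS dE ι1 ι2 ι3 ι4 ι5 ι6 : Type*}
    [Fintype dS] [DecidableEq dS] [Fintype dE] [DecidableEq dE]
    [Fintype ι1] [DecidableEq ι1] [Fintype ι2] [DecidableEq ι2]
    [Fintype ι3] [DecidableEq ι3] [Fintype ι4] [DecidableEq ι4]
    [Fintype ι5] [DecidableEq ι5] [Fintype ι6] [DecidableEq ι6]
    (ρS : Matrix dS dS ℂ) (hρS : ρS.PosSemidef) (hρStr : ρS.trace = 1)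
    (ρE : Matrix dE dE ℂ) (hρE : ρE.PosSemidef) (hρEtr : ρE.trace = 1)
    (U : Matrix (dS × dE) (dS × dE) ℂ) (hU : U ∈ Matrix.unitaryGroup (dS × dE) ℂ)
    (Pk : ι1 → Matrix dS dS ℂ) (hk : IsResolution Pk)
    (Ps : ι2 → Matrix dS dS ℂ) (hs : IsResolution Ps)
    (Pn : ι3 → Matrix dE dE ℂ) (hn : IsResolution Pn)
    (Pk' : ι4 → Matrix dS dS ℂ) (hk' : IsResolution Pk')
    (Ps' : ι5 → Matrix dS dS ℂ) (hs' : IsResolution Ps')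
    (Pn' : ι6 → Matrix dE dE ℂ) (hn' : IsResolution Pn')
    (hcomm : ∀ k s, Pk k * Ps s = Ps s * Pk k)
    (hcomm' : ∀ k' s', Pk' k' * Ps' s' = Ps' s' * Pk' k')
    -- ρ_S is diagonal in the product basis defining Π_s and the Π_k are its
    -- eigenprojectors built from the same basis:
    (hρk : ∀ k, Pk k * ρS = ρS * Pk k)
    (hρs : ∀ s, Ps s * ρS = ρS * Ps s)
    -- the Π_n are non-invasive with respect to ρ_E:
    (hρn : ∀ n, Pn n * ρE = ρE * Pn n) :
    ∀ k s n k' s' n',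
      ∃ q : ℝ, 0 ≤ q ∧
        (Uᴴ * (Pk' k' ⊗ₖ (1 : Matrix dE dE ℂ)) * (Ps' s' ⊗ₖ Pn' n') * U *
          (Ps s ⊗ₖ Pn n) * (Pk k ⊗ₖ (1 : Matrix dE dE ℂ)) * (ρS ⊗ₖ ρE)).trace
          = (q : ℂ) := by
  intro k s n k' s' n'
  -- idempotency facts
  have hkk : Pk k * Pk k = Pk k := by simpa using hk.2.1 k k
  have hss : Ps s * Ps s = Ps s := by simpa using hs.2.1 s s
  have hnn : Pn n * Pn n = Pn n := by simpa using hn.2.1 n n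
  have hkk' : Pk' k' * Pk' k' = Pk' k' := by simpa using hk'.2.1 k' k'
  have hss' : Ps' s' * Ps' s' = Ps' s' := by simpa using hs'.2.1 s' s'
  have hnn' : Pn' n' * Pn' n' = Pn' n' := by simpa using hn'.2.1 n' n'
  -- the filtering matrix M is PSD
  set K : Matrix (dS × dE) (dS × dE) ℂ := (Pk' k' * Ps' s') ⊗ₖ Pn' n' with hK
  have hKpsd : K.PosSemidef := by
    apply aux_kron_psd
    · exact aux_proj_psd (hk'.1 k') (hs'.1 s') hkk' hss' (hcomm' k' s')
    · have : Pn' n' = (Pn' n')ᴴ * Pn' n' := by rw [(hn'.1 n').eq, hnn']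
      rw [this]; exact Matrix.posSemidef_conjTranspose_mul_self _
  have hMpsd : (Uᴴ * K * U).PosSemidef := by
    have := hKpsd.mul_mul_conjTranspose_same Uᴴ
    rwa [Matrix.conjTranspose_conjTranspose] at this
  -- the filtered state N is PSD
  set B : Matrix (dS × dE) (dS × dE) ℂ := (Ps s * Pk k) ⊗ₖ Pn n with hB
  have hρpsd : (ρS ⊗ₖ ρE).PosSemidef := aux_kron_psd hρS hρE
  have hNeq : B * (ρS ⊗ₖ ρE) * Bᴴ = B * (ρS ⊗ₖ ρE) := by
    rw [hB, aux_kron_conjTranspose, Matrix.conjTranspose_mul, (hk.1 k).eq, (hs.1 s).eq,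
      (hn.1 n).eq, ← Matrix.mul_kronecker_mul, ← Matrix.mul_kronecker_mul]
    rw [aux_sandwich (Pk k) (Ps s) ρS hkk hss (hcomm k s) (hρk k) (hρs s),
      aux_sandwich1 (Pn n) ρE hnn (hρn n)]
  have hNpsd : (B * (ρS ⊗ₖ ρE)).PosSemidef := by
    rw [← hNeq]; exact hρpsd.mul_mul_conjTranspose_same B
  -- rewrite the trace as trace (M * N)
  have htr : (Uᴴ * (Pk' k' ⊗ₖ (1 : Matrix dE dE ℂ)) * (Ps' s' ⊗ₖ Pn' n') * U *
      (Ps s ⊗ₖ Pn n) * (Pk k ⊗ₖ (1 : Matrix dE dE ℂ)) * (ρS ⊗ₖ ρE)).trace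
      = ((Uᴴ * K * U) * (B * (ρS ⊗ₖ ρE))).trace := by
    have e1 : (Pk' k' ⊗ₖ (1 : Matrix dE dE ℂ)) * (Ps' s' ⊗ₖ Pn' n') = K := by
      rw [hK, ← Matrix.mul_kronecker_mul, Matrix.one_mul]
    have e2 : (Ps s ⊗ₖ Pn n) * (Pk k ⊗ₖ (1 : Matrix dE dE ℂ)) = B := by
      rw [hB, ← Matrix.mul_kronecker_mul, Matrix.mul_one]
    congr 1
    rw [← e1, ← e2]
    noncomm_ring
  have hpos : 0 ≤ (Uᴴ * (Pk' k' ⊗ₖ (1 : Matrix dE dE ℂ)) * (Ps' s' ⊗ₖ Pn' n') * U *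
      (Ps s ⊗ₖ Pn n) * (Pk k ⊗ₖ (1 : Matrix dE dE ℂ)) * (ρS ⊗ₖ ρE)).trace := by
    rw [htr]; exact aux_trace_mul_nonneg hMpsd hNpsd
  rw [Complex.le_def] at hpos
  refine ⟨_, hpos.1, ?_⟩
  exact (Complex.re_add_im _).symm.trans (by rw [← hpos.2]; simp)
end

section
/- Static integral fluctuation theorem for coherence: let ρ = ∑_k p_k |k⟩⟨k| be a full-rank density matrix on a finite-dimensional Hilbert space, {|s⟩} an orthonormal basis with p̃_s = ⟨s|ρ|s⟩ > 0, and define the quasiprobability q(k,s) = ⟨s|k⟩⟨k|ρ|s⟩ and the stochastic coherence c(k,s) = ln p_k − ln p̃_s. Then ∑_{k,s} q(k,s) e^{-c(k,s)} = 1. -/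
open Matrix

lemma vecMulVec_mulVec' {d : Type*} [Fintype d] (u v x : d → ℂ) :
    (vecMulVec u v) *ᵥ x = (v ⬝ᵥ x) • u := by
  funext i
  simp only [mulVec, vecMulVec_apply, dotProduct, Pi.smul_apply, smul_eq_mul,
    Finset.sum_mul]
  congr 1; funext j; ring

lemma sum_mulVec' {d ι : Type*} [Fintype d] [Fintype ι] (M : ι → Matrix d d ℂ) (x : d → ℂ) :
    (∑ a, M a) *ᵥ x = ∑ a, M a *ᵥ x := by
  funext i
  simp only [mulVec, dotProduct, Finset.sum_apply, Matrix.sum_apply, Finset.sum_mul]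
  exact Finset.sum_comm

lemma dot_sum' {d ι : Type*} [Fintype d] [Fintype ι] (v : d → ℂ) (f : ι → d → ℂ) :
    v ⬝ᵥ (∑ a, f a) = ∑ a, v ⬝ᵥ f a := by
  simp only [dotProduct, Finset.sum_apply, Finset.mul_sum]
  exact Finset.sum_comm

/-- Static integral fluctuation theorem for coherence: for a full-rank density matrix
ρ = ∑_k p_k |k⟩⟨k| and an orthonormal basis {|s⟩} with diagonal entries p̃_s > 0, the
Kirkwood–Dirac quasiprobability q(k,s) = ⟨s|k⟩⟨k|ρ|s⟩ and the stochastic coherence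
c(k,s) = ln p_k − ln p̃_s satisfy ∑_{k,s} q(k,s) e^{-c(k,s)} = 1. -/
theorem stmt13 {d ι : Type*} [Fintype d] [DecidableEq d] [Fintype ι] [DecidableEq ι]
    (p : ι → ℝ) (hp : ∀ k, 0 < p k) (hpsum : ∑ k, p k = 1)
    (K : ι → d → ℂ)
    (hKorth : ∀ a b, star (K a) ⬝ᵥ K b = if a = b then 1 else 0)
    (hKcomplete : ∑ a, vecMulVec (K a) (star (K a)) = 1)
    (S : ι → d → ℂ)
    (hSorth : ∀ a b, star (S a) ⬝ᵥ S b = if a = b then 1 else 0)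
    (hScomplete : ∑ a, vecMulVec (S a) (star (S a)) = 1)
    (ρ : Matrix d d ℂ) (hspec : ρ = ∑ k, (p k : ℂ) • vecMulVec (K k) (star (K k)))
    (hdiag : ∀ s, 0 < (star (S s) ⬝ᵥ ρ *ᵥ S s).re) :
    ∑ k, ∑ s, (star (S s) ⬝ᵥ K k) * (star (K k) ⬝ᵥ ρ *ᵥ S s) *
      Complex.exp (-((Real.log (p k) : ℂ)
        - (Real.log ((star (S s) ⬝ᵥ ρ *ᵥ S s).re) : ℂ))) = 1 := by
  -- ⟨k|ρ|s⟩ = p_k ⟨k|s⟩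
  have hKρ : ∀ k s, star (K k) ⬝ᵥ ρ *ᵥ S s = (p k : ℂ) * (star (K k) ⬝ᵥ S s) := by
    intro k s
    rw [hspec]
    simp only [sum_mulVec', Matrix.smul_mulVec, dot_sum',
      dotProduct_smul, vecMulVec_mulVec', dotProduct_smul, smul_eq_mul]
    rw [Finset.sum_eq_single k]
    · rw [hKorth, if_pos rfl, mul_one]
    · intro b _ hb
      rw [hKorth, if_neg (Ne.symm hb), mul_zero, mul_zero]
    · simp
  -- diagonal entry as real sum
  have hts : ∀ s, star (S s) ⬝ᵥ ρ *ᵥ S s =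
      ∑ k, (p k : ℂ) * ((star (S s) ⬝ᵥ K k) * (star (K k) ⬝ᵥ S s)) := by
    intro s
    rw [hspec]
    simp only [sum_mulVec', Matrix.smul_mulVec, dot_sum',
      dotProduct_smul, vecMulVec_mulVec', dotProduct_smul, smul_eq_mul]
    congr 1; funext k; ring
  have hconj : ∀ k s, star (K k) ⬝ᵥ S s = starRingEnd ℂ (star (S s) ⬝ᵥ K k) := by
    intro k s
    simp [dotProduct, Finset.sum_comm, mul_comm, map_sum]
  -- t s is real
  have hreal : ∀ s, star (S s) ⬝ᵥ ρ *ᵥ S s = ((star (S s) ⬝ᵥ ρ *ᵥ S s).re : ℂ) := by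
    intro s
    refine (Complex.conj_eq_iff_re.mp ?_).symm
    rw [hts, map_sum]
    congr 1; funext k
    rw [hconj]
    simp only [_root_.map_mul, Complex.conj_conj, Complex.conj_ofReal]
    ring
  -- completeness sums
  have hKsum : ∀ s, ∑ k, (star (S s) ⬝ᵥ K k) * (star (K k) ⬝ᵥ S s) = 1 := by
    intro s
    have := congrArg (fun M => star (S s) ⬝ᵥ M *ᵥ S s) hKcomplete
    simp only [sum_mulVec', dot_sum', vecMulVec_mulVec', dotProduct_smul,
      smul_eq_mul, Matrix.one_mulVec] at this
    rw [hSorth, if_pos rfl] at this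
    rw [← this]
    exact Finset.sum_congr rfl fun k _ => by ring
  have hSsum : ∀ k, ∑ s, (star (S s) ⬝ᵥ K k) * (star (K k) ⬝ᵥ S s) = 1 := by
    intro k
    have := congrArg (fun M => star (K k) ⬝ᵥ M *ᵥ K k) hScomplete
    simp only [sum_mulVec', dot_sum', vecMulVec_mulVec', dotProduct_smul,
      smul_eq_mul, Matrix.one_mulVec] at this
    rw [hKorth, if_pos rfl] at this
    rw [← this]
  -- exponential simplifies
  have hexp : ∀ k s, Complex.exp (-((Real.log (p k) : ℂ)
        - (Real.log ((star (S s) ⬝ᵥ ρ *ᵥ S s).re) : ℂ)))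
      = (((star (S s) ⬝ᵥ ρ *ᵥ S s).re / p k : ℝ) : ℂ) := by
    intro k s
    have h1 : -((Real.log (p k) : ℂ) - (Real.log ((star (S s) ⬝ᵥ ρ *ᵥ S s).re) : ℂ))
        = ((Real.log ((star (S s) ⬝ᵥ ρ *ᵥ S s).re) - Real.log (p k) : ℝ) : ℂ) := by
      push_cast; ring
    rw [h1, ← Complex.ofReal_exp, Real.exp_sub, Real.exp_log (hdiag s), Real.exp_log (hp k)]
  -- main computation
  calc ∑ k, ∑ s, (star (S s) ⬝ᵥ K k) * (star (K k) ⬝ᵥ ρ *ᵥ S s) *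
      Complex.exp (-((Real.log (p k) : ℂ)
        - (Real.log ((star (S s) ⬝ᵥ ρ *ᵥ S s).re) : ℂ)))
      = ∑ s, ∑ k, (((star (S s) ⬝ᵥ ρ *ᵥ S s).re : ℝ) : ℂ) *
          ((star (S s) ⬝ᵥ K k) * (star (K k) ⬝ᵥ S s)) := by
        rw [Finset.sum_comm]
        congr 1; funext s; congr 1; funext k
        rw [hexp, hKρ]
        have hpk : (p k : ℂ) ≠ 0 := by exact_mod_cast (hp k).ne'
        push_cast
        field_simp
    _ = ∑ s, (((star (S s) ⬝ᵥ ρ *ᵥ S s).re : ℝ) : ℂ) := by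
        congr 1; funext s
        rw [← Finset.mul_sum, hKsum, mul_one]
    _ = ∑ s, star (S s) ⬝ᵥ ρ *ᵥ S s := by
        congr 1; funext s; rw [← hreal]
    _ = ∑ k, (p k : ℂ) * ∑ s, ((star (S s) ⬝ᵥ K k) * (star (K k) ⬝ᵥ S s)) := by
        simp only [hts]
        rw [Finset.sum_comm]
        congr 1; funext k
        rw [Finset.mul_sum]
    _ = 1 := by
        simp only [hSsum, mul_one]
        exact_mod_cast hpsum
end
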